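/- arXiv:2209.09077 — 3 statements merged into one kernel-verified Lean document; each statement's English description precedes it below -/
import Mathlib

section
/- Define the maximal regret of the threshold rule with cutoff c ∈ ℝ in the Gaussian shift experiment by ρ(c) := sup_{b∈ℝ} b·(1{b > 0} − (1 − Φ(c − b))), where Φ is the standard normal cumulative distribution function. Then ρ attains its infimum over ℝ uniquely at c = 0; that is, ρ(0) ≤ ρ(c) for every c ∈ ℝ, with equality only if c = 0. -/
open MeasureTheory ProbabilityTheory Real Set

namespace GSMC

noncomputable def G : Measure ℝ := gaussianReal 0 1

lemma hv1 : (1 : NNReal) ≠ 0 := one_ne_zero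

instance : IsProbabilityMeasure G := by unfold G; infer_instance

lemma G_apply (s : Set ℝ) (hs : MeasurableSet s) :
    (G s).toReal = ∫ x in s, gaussianPDFReal 0 1 x := by
  rw [G, gaussianReal_apply_eq_integral 0 hv1 s, ENNReal.toReal_ofReal]
  exact integral_nonneg (fun x => gaussianPDFReal_nonneg 0 1 x)

noncomputable def Φ₀ (t : ℝ) : ℝ := (G (Iic t)).toReal

lemma Φ₀_nonneg (t : ℝ) : 0 ≤ Φ₀ t := ENNReal.toReal_nonneg

lemma Φ₀_le_one (t : ℝ) : Φ₀ t ≤ 1 := by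
  have h := measure_mono (μ := G) (subset_univ (Iic t))
  rw [measure_univ] at h
  simpa [Φ₀] using ENNReal.toReal_mono (by simp) h

lemma Φ₀_mono {s t : ℝ} (h : s ≤ t) : Φ₀ s ≤ Φ₀ t :=
  ENNReal.toReal_mono (measure_ne_top _ _) (measure_mono (Iic_subset_Iic.2 h))

lemma G_pos_of_vol_pos {s : Set ℝ} (h : volume s ≠ 0) : 0 < G s := by
  rcases eq_zero_or_pos (G s) with h0 | h0
  · exact absurd ((gaussianReal_absolutelyContinuous' 0 hv1) h0) h
  · exact h0

lemma Φ₀_pos (t : ℝ) : 0 < Φ₀ t := by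
  refine ENNReal.toReal_pos (G_pos_of_vol_pos ?_).ne' (measure_ne_top _ _)
  simp [Real.volume_Iic]

lemma Φ₀_strictMono : StrictMono Φ₀ := by
  intro s t hst
  have hd : Disjoint (Iic s) (Ioc s t) := by
    simp [Set.disjoint_left]
    intro a ha h2; linarith
  have hu : Iic s ∪ Ioc s t = Iic t := Set.Iic_union_Ioc_eq_Iic hst.le
  have : G (Iic t) = G (Iic s) + G (Ioc s t) := by
    rw [← hu, measure_union hd measurableSet_Ioc]
  have hpos : 0 < G (Ioc s t) := G_pos_of_vol_pos (by simp [Real.volume_Ioc, hst])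
  have h1 : Φ₀ t = Φ₀ s + (G (Ioc s t)).toReal := by
    rw [Φ₀, this, ENNReal.toReal_add (measure_ne_top _ _) (measure_ne_top _ _)]; rfl
  have h2 : 0 < (G (Ioc s t)).toReal := ENNReal.toReal_pos hpos.ne' (measure_ne_top _ _)
  rw [h1]; linarith

lemma Φ₀_symm (t : ℝ) : Φ₀ (-t) = 1 - Φ₀ t := by
  have hmap : G.map (fun x => -x) = G := by
    have := gaussianReal_map_const_mul (μ := 0) (v := 1) (-1)
    simp only [neg_one_mul, mul_zero] at this
    rw [G, this]
    congr 1
    ext : 1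
    norm_num
  have h1 : G (Iic (-t)) = G (Ici t) := by
    conv_lhs => rw [← hmap]
    rw [Measure.map_apply (measurable_neg) measurableSet_Iic]
    congr 1
    ext x
    simp [le_neg]
  have hsingleton : G {t} = 0 := by
    refine (gaussianReal_absolutelyContinuous 0 hv1) ?_
    simp
  have h2 : G (Ici t) = G (Ioi t) := by
    rw [← Ioi_union_left, measure_union (by simp) (measurableSet_singleton t), hsingleton, add_zero]
  have h3 : G (Iic t) + G (Ioi t) = 1 := by
    rw [← measure_union (by simp [Set.disjoint_left]) measurableSet_Ioi]
    rw [Iic_union_Ioi, measure_univ]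
  have h4 : (G (Iic t)).toReal + (G (Ioi t)).toReal = 1 := by
    rw [← ENNReal.toReal_add (measure_ne_top _ _) (measure_ne_top _ _), h3, ENNReal.toReal_one]
  rw [Φ₀, Φ₀, h1, h2]
  linarith

lemma Φ₀_tail {t : ℝ} (ht : t ≤ -2) : Φ₀ t ≤ exp t := by
  rw [Φ₀, G_apply _ measurableSet_Iic]
  calc ∫ x in Iic t, gaussianPDFReal 0 1 x ≤ ∫ x in Iic t, exp x := by
        refine setIntegral_mono_on ((integrable_gaussianPDFReal 0 1).integrableOn)
          (integrableOn_exp_Iic t) measurableSet_Iic (fun x hx => ?_)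
        simp only [mem_Iic] at hx
        have hx2 : x ≤ -2 := hx.trans ht
        rw [gaussianPDFReal]
        have h1 : (√(2 * π * (1:NNReal)))⁻¹ ≤ 1 := by
          rw [NNReal.coe_one, mul_one]
          rw [inv_le_one_iff₀]
          right
          rw [show (1:ℝ) = √1 by simp]
          apply Real.sqrt_le_sqrt
          nlinarith [pi_gt_three]
        have h2 : rexp (-(x - 0) ^ 2 / (2 * (1:NNReal))) ≤ rexp x := by
          apply Real.exp_le_exp.2
          rw [NNReal.coe_one]
          nlinarith
        calc (√(2 * π * (1:NNReal)))⁻¹ * rexp (-(x - 0) ^ 2 / (2 * (1:NNReal)))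
            ≤ 1 * rexp x := by
              apply mul_le_mul h1 h2 (exp_nonneg _) zero_le_one
          _ = rexp x := one_mul _
    _ = exp t := integral_exp_Iic t

lemma Φ₀_lip (s t : ℝ) : |Φ₀ t - Φ₀ s| ≤ |t - s| := by
  wlog h : s ≤ t generalizing s t
  · rw [abs_sub_comm, abs_sub_comm t s]; exact this t s (le_of_not_ge h)
  have h1 : Φ₀ t - Φ₀ s = (G (Ioc s t)).toReal := by
    have hd : Disjoint (Iic s) (Ioc s t) := by
      simp [Set.disjoint_left]; intro a ha h2; linarith
    have hu : Iic s ∪ Ioc s t = Iic t := Set.Iic_union_Ioc_eq_Iic h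
    have : G (Iic t) = G (Iic s) + G (Ioc s t) := by
      rw [← hu, measure_union hd measurableSet_Ioc]
    rw [Φ₀, Φ₀, this, ENNReal.toReal_add (measure_ne_top _ _) (measure_ne_top _ _)]
    ring
  rw [h1, abs_of_nonneg ENNReal.toReal_nonneg, abs_of_nonneg (by linarith)]
  rw [G_apply _ measurableSet_Ioc]
  calc ∫ x in Ioc s t, gaussianPDFReal 0 1 x ≤ ∫ _x in Ioc s t, (1:ℝ) := by
        refine setIntegral_mono_on ((integrable_gaussianPDFReal 0 1).integrableOn)
          (integrableOn_const (by simp [Real.volume_Ioc]))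
          measurableSet_Ioc (fun x _ => ?_)
        rw [gaussianPDFReal]
        have h1 : (√(2 * π * (1:NNReal)))⁻¹ ≤ 1 := by
          rw [NNReal.coe_one, mul_one, inv_le_one_iff₀]
          right
          rw [show (1:ℝ) = √1 by simp]
          apply Real.sqrt_le_sqrt
          nlinarith [pi_gt_three]
        have h2 : rexp (-(x - 0) ^ 2 / (2 * (1:NNReal))) ≤ 1 := by
          rw [← Real.exp_zero]
          apply Real.exp_le_exp.2
          rw [NNReal.coe_one]
          nlinarith
        nlinarith [Real.exp_nonneg (-(x - 0) ^ 2 / (2 * (1:NNReal))), inv_nonneg.2 (Real.sqrt_nonneg (2 * π * (1:NNReal)))]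
    _ ≤ t - s := by
        rw [setIntegral_const]
        simp [Real.volume_Ioc, ENNReal.toReal_ofReal (by linarith : (0:ℝ) ≤ t - s)]
        exact h

lemma Φ₀_continuous : Continuous Φ₀ := by
  have : LipschitzWith 1 Φ₀ := by
    refine LipschitzWith.of_dist_le_mul (fun x y => ?_)
    rw [Real.dist_eq, Real.dist_eq, NNReal.coe_one, one_mul]
    exact Φ₀_lip y x
  exact this.continuous

end GSMC

namespace GSMC

lemma exp_neg_le {s : ℝ} (hs : 0 < s) : exp (-s) ≤ 4 / s^2 := by
  have hhalf : 1 + s/2 ≤ exp (s/2) := by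
    have := Real.add_one_le_exp (s/2); linarith
  have hsq : exp s = exp (s/2) * exp (s/2) := by
    rw [← Real.exp_add]; ring_nf
  have h : s^2/4 ≤ exp s := by nlinarith
  rw [Real.exp_neg]
  have hs4 : 0 < s^2/4 := by positivity
  calc (exp s)⁻¹ ≤ (s^2/4)⁻¹ := by
        apply inv_anti₀ hs4 h
    _ = 4 / s^2 := by field_simp

noncomputable def f (c b : ℝ) : ℝ :=
  b * ((if 0 < b then (1:ℝ) else 0) - (1 - Φ₀ (c - b)))

lemma f_abs (c b : ℝ) : f c b = |b| * Φ₀ ((if 0 < b then c else -c) - |b|) := by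
  by_cases hb : 0 < b
  · rw [f, if_pos hb, if_pos hb, abs_of_pos hb]; ring
  · have hsym := Φ₀_symm (c - b)
    rw [f, if_neg hb, if_neg hb, abs_of_nonpos (le_of_not_gt hb),
      show -c - -b = -(c - b) by ring, hsym]
    ring

lemma f_zero_eq (b : ℝ) : f 0 b = |b| * Φ₀ (-|b|) := by
  rw [f_abs]
  congr 1
  by_cases hb : 0 < b <;> simp [hb]

lemma f_le (c b : ℝ) : f c b ≤ |c| + 4 := by
  rw [f_abs]
  rcases eq_or_ne b 0 with rfl | hb
  · simp; positivity
  · have hb' : 0 < |b| := abs_pos.2 hb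
    set d := if 0 < b then c else -c with hd
    have hdabs : |d| = |c| := by by_cases h : 0 < b <;> simp [hd, h, abs_neg]
    rcases le_or_gt |b| (|d| + 2) with h | h
    · have hle : |b| * Φ₀ (d - |b|) ≤ |b| * 1 :=
        mul_le_mul_of_nonneg_left (Φ₀_le_one _) hb'.le
      rw [mul_one] at hle
      rw [hdabs] at h
      linarith
    · have habs : 0 ≤ |d| := abs_nonneg d
      have h1 : d - |b| ≤ -2 := by linarith [le_abs_self d]
      have h2 : Φ₀ (d - |b|) ≤ exp (d - |b|) := Φ₀_tail h1
      have h3 : exp (d - |b|) ≤ exp (-(|b| - |d|)) :=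
        exp_le_exp.2 (by linarith [le_abs_self d])
      set s := |b| - |d| with hs
      have hs2 : 2 < s := by linarith
      have h5 : exp (-s) ≤ 4 / s^2 := exp_neg_le (by linarith)
      have h6 : Φ₀ (d - |b|) ≤ 4 / s^2 := h2.trans (h3.trans h5)
      calc |b| * Φ₀ (d - |b|) ≤ |b| * (4 / s^2) :=
            mul_le_mul_of_nonneg_left h6 hb'.le
        _ ≤ |d| + 4 := by
            rw [mul_div_assoc', div_le_iff₀ (by positivity)]
            have hb_eq : |b| = s + |d| := by rw [hs]; ring
            nlinarith [mul_nonneg habs (sq_nonneg s), sq_nonneg (s - 2),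
              mul_nonneg habs (show (0:ℝ) ≤ s ^ 2 - 4 by nlinarith)]
        _ = |c| + 4 := by rw [hdabs]

lemma f_nonneg (c b : ℝ) : 0 ≤ f c b := by
  rw [f_abs]; exact mul_nonneg (abs_nonneg b) (Φ₀_nonneg _)

lemma f_bdd (c : ℝ) : BddAbove (Set.range (f c)) :=
  ⟨|c| + 4, by rintro _ ⟨b, rfl⟩; exact f_le c b⟩

noncomputable def w (c b : ℝ) : ℝ := if 0 ≤ c then |b| else -|b|

lemma f_w (c : ℝ) {b : ℝ} (hb : b ≠ 0) : f c (w c b) = |b| * Φ₀ (|c| - |b|) := by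
  have hb' : 0 < |b| := abs_pos.2 hb
  by_cases hc : 0 ≤ c
  · rw [w, if_pos hc, f_abs, if_pos hb', abs_abs, abs_of_nonneg hc]
  · rw [w, if_neg hc, f_abs, if_neg (by linarith : ¬ 0 < -|b|), abs_neg, abs_abs,
      abs_of_neg (lt_of_not_ge hc)]

lemma exists_max : ∃ t0 : ℝ, 0 < t0 ∧ ∀ s : ℝ, 0 ≤ s → s * Φ₀ (-s) ≤ t0 * Φ₀ (-t0) := by
  set h : ℝ → ℝ := fun t => t * Φ₀ (-t) with hh
  have hc : Continuous h := continuous_id.mul (Φ₀_continuous.comp continuous_neg)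
  set h1 := Φ₀ (-1) with hh1def
  have hh1 : 0 < h1 := Φ₀_pos _
  set T := max 2 (8 / h1) with hT
  have hT2 : (2:ℝ) ≤ T := le_max_left _ _
  obtain ⟨t0, ht0mem, ht0max⟩ := IsCompact.exists_isMaxOn (isCompact_Icc (a := (0:ℝ)) (b := T))
    ⟨0, by constructor <;> linarith⟩ hc.continuousOn
  have h1mem : (1:ℝ) ∈ Icc (0:ℝ) T := ⟨zero_le_one, by linarith⟩
  have hle1 : h 1 ≤ h t0 := ht0max h1mem
  have hh1eq : h 1 = h1 := by simp [hh, hh1def]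
  refine ⟨t0, ?_, ?_⟩
  · by_contra hle
    push_neg at hle
    have ht00 : t0 = 0 := le_antisymm hle ht0mem.1
    rw [ht00] at hle1
    simp [hh] at hle1
    rw [hh1eq] at *
    linarith [hle1]
  · intro s hs
    rcases le_or_gt s T with hsT | hsT
    · exact ht0max ⟨hs, hsT⟩
    · have hs2 : (2:ℝ) < s := lt_of_le_of_lt hT2 hsT
      have htail : Φ₀ (-s) ≤ exp (-s) := Φ₀_tail (by linarith)
      have hb1 : s * Φ₀ (-s) ≤ s * (4 / s^2) :=
        mul_le_mul_of_nonneg_left (htail.trans (exp_neg_le (by linarith))) (by linarith)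
      have h4s : s * (4 / s^2) = 4 / s := by
        field_simp
      have hsT8 : 8 / h1 < s := lt_of_le_of_lt (le_max_right _ _) hsT
      have h8 : 8 < s * h1 := by
        rw [div_lt_iff₀ hh1] at hsT8
        linarith
      have hlt : 4 / s < h1 := by
        rw [div_lt_iff₀ (by linarith)]
        nlinarith
      have : s * Φ₀ (-s) < h1 := by rw [h4s] at hb1; linarith
      rw [← hh1eq] at this
      exact le_of_lt (lt_of_lt_of_le this hle1)

end GSMC

open MeasureTheory ProbabilityTheory

/-- The maximal regret `ρ(c) := sup_b b·(1{b>0} − (1 − Φ(c − b)))` of the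
threshold rule with cutoff `c` in the Gaussian shift experiment attains its infimum over
`ℝ` uniquely at `c = 0`. -/
theorem gaussian_shift_minimax_cutoff_zero
    (Φ : ℝ → ℝ) (hΦ : ∀ t, Φ t = ((gaussianReal 0 1) (Set.Iic t)).toReal)
    (ρ : ℝ → ℝ)
    (hρ : ∀ c, ρ c = ⨆ b : ℝ, b * ((if 0 < b then (1 : ℝ) else 0) - (1 - Φ (c - b)))) :
    ∀ c : ℝ, ρ 0 ≤ ρ c ∧ (ρ c = ρ 0 → c = 0) := by
  have hΦ0 : Φ = GSMC.Φ₀ := funext fun t => by rw [hΦ t]; rfl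
  subst hΦ0
  have hρ' : ∀ c, ρ c = ⨆ b : ℝ, GSMC.f c b := by
    intro c; rw [hρ c]; rfl
  intro c
  have key1 : ρ 0 ≤ ρ c := by
    rw [hρ' 0, hρ' c]
    apply ciSup_le
    intro b
    rcases eq_or_ne b 0 with rfl | hb
    · have h0 : GSMC.f 0 0 = GSMC.f c 0 := by simp [GSMC.f]
      rw [h0]
      exact le_ciSup (GSMC.f_bdd c) 0
    · calc GSMC.f 0 b = |b| * GSMC.Φ₀ (-|b|) := GSMC.f_zero_eq b
        _ ≤ |b| * GSMC.Φ₀ (|c| - |b|) :=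
            mul_le_mul_of_nonneg_left (GSMC.Φ₀_mono (by linarith [abs_nonneg c])) (abs_nonneg b)
        _ = GSMC.f c (GSMC.w c b) := (GSMC.f_w c hb).symm
        _ ≤ ⨆ b : ℝ, GSMC.f c b := le_ciSup (GSMC.f_bdd c) _
  have key2 : c ≠ 0 → ρ 0 < ρ c := by
    intro hc
    obtain ⟨t0, ht0, hmax⟩ := GSMC.exists_max
    have h1 : ρ 0 ≤ t0 * GSMC.Φ₀ (-t0) := by
      rw [hρ' 0]
      apply ciSup_le
      intro b
      rw [GSMC.f_zero_eq b]
      exact hmax |b| (abs_nonneg b)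
    have h2 : t0 * GSMC.Φ₀ (-t0) < t0 * GSMC.Φ₀ (|c| - t0) := by
      apply mul_lt_mul_of_pos_left (GSMC.Φ₀_strictMono ?_) ht0
      have := abs_pos.2 hc
      linarith
    have h3 : t0 * GSMC.Φ₀ (|c| - t0) ≤ ρ c := by
      rw [hρ' c]
      have heq : GSMC.f c (GSMC.w c t0) = t0 * GSMC.Φ₀ (|c| - t0) := by
        rw [GSMC.f_w c ht0.ne', abs_of_pos ht0]
      rw [← heq]
      exact le_ciSup (GSMC.f_bdd c) _
    linarith
  exact ⟨key1, fun h => by_contra fun hc => absurd h (ne_of_gt (by linarith [key2 hc]))⟩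
end

section
/- Let Φ be the standard normal cumulative distribution function, let φ: ℝ → [0,1] be measurable with α := ∫ φ dN(0,1) ∈ (0,1), and let c := Φ^{-1}(1−α). Then for every b ∈ ℝ, the regret risk of the threshold rule is no larger than that of φ: b·(1{b > 0} − ∫ 1{x > c} dN(b,1)) ≤ b·(1{b > 0} − ∫ φ dN(b,1)). -/
open MeasureTheory ProbabilityTheory Real
open scoped ENNReal NNReal

private lemma gauss_pdf_ratio (b x : ℝ) :
    gaussianPDFReal b 1 x = gaussianPDFReal 0 1 x * Real.exp (b * x - b ^ 2 / 2) := by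
  simp only [gaussianPDFReal, NNReal.coe_one, mul_one, sub_zero]
  rw [mul_assoc, ← Real.exp_add]
  congr 1
  ring

private lemma gauss_integral_eq (m : ℝ) (f : ℝ → ℝ) :
    ∫ x, f x ∂(gaussianReal m 1) = ∫ x, f x * gaussianPDFReal m 1 x := by
  rw [gaussianReal_of_var_ne_zero _ one_ne_zero, gaussianPDF_def]
  have h : (fun x => ENNReal.ofReal (gaussianPDFReal m 1 x))
      = fun x => (((gaussianPDFReal m 1 x).toNNReal : ℝ≥0) : ℝ≥0∞) := rfl
  rw [h, integral_withDensity_eq_integral_smul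
      ((measurable_gaussianPDFReal m 1).real_toNNReal) f]
  refine integral_congr_ae (ae_of_all _ fun x => ?_)
  simp [NNReal.smul_def, Real.coe_toNNReal _ (gaussianPDFReal_nonneg m 1 x), mul_comm]

private lemma gauss_measure_toReal (m : ℝ) (s : Set ℝ) :
    ((gaussianReal m 1) s).toReal = ∫ x in s, gaussianPDFReal m 1 x := by
  rw [gaussianReal_apply_eq_integral _ one_ne_zero s,
    ENNReal.toReal_ofReal (integral_nonneg fun x => gaussianPDFReal_nonneg m 1 x)]

/-- For a randomized rule `φ : ℝ → [0,1]` of size `α = ∫ φ dN(0,1) ∈ (0,1)`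
and `c = Φ⁻¹(1−α)`, the regret risk of the threshold rule `1{x > c}` is no larger than that
of `φ` at every shift `b`. -/
theorem gaussian_threshold_regret_dominance
    (φ : ℝ → ℝ) (hφmeas : Measurable φ) (hφrange : ∀ x, φ x ∈ Set.Icc (0 : ℝ) 1)
    (α : ℝ) (hα : α = ∫ x, φ x ∂(gaussianReal 0 1)) (hα01 : α ∈ Set.Ioo (0 : ℝ) 1)
    (c : ℝ) (hc : ((gaussianReal 0 1) (Set.Iic c)).toReal = 1 - α) :
    ∀ b : ℝ,
      b * ((if 0 < b then (1 : ℝ) else 0) - ((gaussianReal b 1) (Set.Ioi c)).toReal)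
        ≤ b * ((if 0 < b then (1 : ℝ) else 0) - ∫ x, φ x ∂(gaussianReal b 1)) := by
  intro b
  set g : ℝ → ℝ → ℝ := fun m x => gaussianPDFReal m 1 x with hg
  -- the "excess" function h = indicator of Ioi c minus φ
  set h : ℝ → ℝ := fun x => (if c < x then (1 : ℝ) else 0) - φ x with hh
  have hmeas : Measurable h := by
    refine Measurable.sub ?_ hφmeas
    exact Measurable.ite measurableSet_Ioi measurable_const measurable_const
  have hbound : ∀ x, |h x| ≤ 1 := by
    intro x
    have h1 := (hφrange x).1
    have h2 := (hφrange x).2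
    rw [abs_le]
    constructor <;> simp only [hh] <;> split_ifs <;> nlinarith
  -- integrability of h * g m
  have hint : ∀ m : ℝ, Integrable (fun x => h x * g m x) := by
    intro m
    refine Integrable.bdd_mul (c := 1) (integrable_gaussianPDFReal m 1) hmeas.aestronglyMeasurable (ae_of_all _ ?_)
    intro x
    simpa using hbound x
  -- pointwise inequality: b * h x * (g b x - k * g 0 x) ≥ 0
  set k : ℝ := Real.exp (b * c - b ^ 2 / 2) with hk
  have hpt : ∀ x, 0 ≤ b * (h x * (g b x - k * g 0 x)) := by
    intro x
    have hgr : g b x - k * g 0 x = g 0 x * (Real.exp (b * x - b ^ 2 / 2) - k) := by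
      show gaussianPDFReal b 1 x - k * gaussianPDFReal 0 1 x = _
      rw [gauss_pdf_ratio b x]; ring
    have hg0 : 0 ≤ g 0 x := gaussianPDFReal_nonneg 0 1 x
    have key : 0 ≤ (h x) * (b * (Real.exp (b * x - b ^ 2 / 2) - k)) := by
      rcases lt_or_ge c x with hx | hx
      · have h1 : 0 ≤ h x := by simp only [hh, if_pos hx]; linarith [(hφrange x).2]
        have h2 : 0 ≤ b * (Real.exp (b * x - b ^ 2 / 2) - k) := by
          rcases le_or_gt 0 b with hb | hb
          · have : k ≤ Real.exp (b * x - b ^ 2 / 2) := by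
              apply Real.exp_le_exp.mpr; nlinarith
            nlinarith
          · have : Real.exp (b * x - b ^ 2 / 2) ≤ k := by
              apply Real.exp_le_exp.mpr; nlinarith
            nlinarith
        exact mul_nonneg h1 h2
      · have h1 : h x ≤ 0 := by
          simp only [hh, if_neg (not_lt.mpr hx)]; linarith [(hφrange x).1]
        have h2 : b * (Real.exp (b * x - b ^ 2 / 2) - k) ≤ 0 := by
          rcases le_or_gt 0 b with hb | hb
          · have : Real.exp (b * x - b ^ 2 / 2) ≤ k := by
              apply Real.exp_le_exp.mpr; nlinarith
            nlinarith
          · have : k ≤ Real.exp (b * x - b ^ 2 / 2) := by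
              apply Real.exp_le_exp.mpr; nlinarith
            nlinarith
        nlinarith [mul_nonneg (neg_nonneg.mpr h1) (neg_nonneg.mpr h2)]
    calc (0:ℝ) ≤ g 0 x * ((h x) * (b * (Real.exp (b * x - b ^ 2 / 2) - k))) :=
          mul_nonneg hg0 key
      _ = b * (h x * (g b x - k * g 0 x)) := by rw [hgr]; ring
  -- integrate the pointwise inequality
  have hint2 : ∀ m : ℝ, Integrable (fun x => b * (h x * (g m x))) := fun m => (hint m).const_mul b
  have hIneq : 0 ≤ ∫ x, b * (h x * (g b x - k * g 0 x)) :=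
    integral_nonneg hpt
  have hsplit : ∫ x, b * (h x * (g b x - k * g 0 x))
      = b * ((∫ x, h x * g b x) - k * ∫ x, h x * g 0 x) := by
    have : (fun x => b * (h x * (g b x - k * g 0 x)))
        = fun x => b * (h x * g b x) - (b * k) * (h x * g 0 x) := by
      funext x; ring
    rw [this, integral_sub ((hint b).const_mul b) ((hint 0).const_mul (b * k)),
      integral_const_mul, integral_const_mul]
    ring
  -- ∫ h * g m = (measure of Ioi c under N(m,1)) - ∫ φ dN(m,1)
  have hdecomp : ∀ m : ℝ, ∫ x, h x * g m x
      = ((gaussianReal m 1) (Set.Ioi c)).toReal - ∫ x, φ x ∂(gaussianReal m 1) := by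
    intro m
    have hφint : Integrable (fun x => φ x * g m x) := by
      refine Integrable.bdd_mul (c := 1) (integrable_gaussianPDFReal m 1) hφmeas.aestronglyMeasurable
        (ae_of_all _ fun x => ?_)
      rw [Real.norm_eq_abs, abs_le]
      exact ⟨by linarith [(hφrange x).1], (hφrange x).2⟩
    have hindint : Integrable (fun x => (if c < x then (1:ℝ) else 0) * g m x) := by
      have : (fun x => (if c < x then (1:ℝ) else 0) * g m x)
          = Set.indicator (Set.Ioi c) (fun x => g m x) := by
        funext x
        by_cases hx : c < x
        · simp [Set.indicator, hx]
        · simp [Set.indicator, hx]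
      rw [this]
      exact (integrable_gaussianPDFReal m 1).indicator measurableSet_Ioi
    have h1 : (fun x => h x * g m x)
        = fun x => (if c < x then (1:ℝ) else 0) * g m x - φ x * g m x := by
      funext x; simp only [hh]; ring
    rw [h1, integral_sub hindint hφint]
    congr 1
    · have : (fun x => (if c < x then (1:ℝ) else 0) * g m x)
          = Set.indicator (Set.Ioi c) (fun x => g m x) := by
        funext x
        by_cases hx : c < x
        · simp [Set.indicator, hx]
        · simp [Set.indicator, hx]
      rw [this, integral_indicator measurableSet_Ioi, gauss_measure_toReal]
    · rw [gauss_integral_eq m φ]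
  -- the zero-mean integral vanishes
  have hT0 : ((gaussianReal 0 1) (Set.Ioi c)).toReal = α := by
    have hprob : IsProbabilityMeasure (gaussianReal 0 1) := by infer_instance
    have hcompl : (gaussianReal 0 1) (Set.Ioi c) = 1 - (gaussianReal 0 1) (Set.Iic c) := by
      rw [← Set.compl_Iic, measure_compl measurableSet_Iic (measure_ne_top _ _), measure_univ]
    have hle : (gaussianReal 0 1) (Set.Iic c) ≤ 1 := prob_le_one
    rw [hcompl, ENNReal.toReal_sub_of_le hle ENNReal.one_ne_top, ENNReal.toReal_one, hc]
    ring
  have hzero : ∫ x, h x * g 0 x = 0 := by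
    rw [hdecomp 0, hT0, ← hα]
    ring
  rw [hsplit, hzero, hdecomp b] at hIneq
  -- conclude
  set T := ((gaussianReal b 1) (Set.Ioi c)).toReal
  set A := ∫ x, φ x ∂(gaussianReal b 1)
  have : 0 ≤ b * (T - A) := by linarith [hIneq]
  nlinarith [this]
end

section
/- For every measurable φ: ℝ → [0,1], the zero-threshold rule is minimax for the regret risk in the Gaussian shift experiment: sup_{b∈ℝ} b·(1{b > 0} − ∫ 1{x > 0} dN(b,1)) ≤ sup_{b∈ℝ} b·(1{b > 0} − ∫ φ dN(b,1)). -/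
open MeasureTheory ProbabilityTheory Real
open scoped NNReal ENNReal

private lemma pdf_le_pdf {μ μ' x : ℝ} (h : (x - μ')^2 ≤ (x - μ)^2) :
    gaussianPDFReal μ 1 x ≤ gaussianPDFReal μ' 1 x := by
  unfold gaussianPDFReal
  apply mul_le_mul_of_nonneg_left _ (by positivity)
  exact Real.exp_le_exp.mpr (by push_cast; linarith)

private lemma pdf_neg (a x : ℝ) : gaussianPDFReal (-a) 1 x = gaussianPDFReal a 1 (-x) := by
  unfold gaussianPDFReal
  ring_nf

private lemma int_phi_eq (φ : ℝ → ℝ) (hφmeas : Measurable φ) (b : ℝ) :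
    ∫ x, φ x ∂(gaussianReal b 1) = ∫ x, gaussianPDFReal b 1 x * φ x := by
  rw [gaussianReal_of_var_ne_zero _ one_ne_zero, gaussianPDF_def]
  have h : (fun x => ENNReal.ofReal (gaussianPDFReal b 1 x))
      = fun x => ((Real.toNNReal (gaussianPDFReal b 1 x) : ℝ≥0) : ENNReal) := rfl
  rw [h, integral_withDensity_eq_integral_smul
      ((measurable_gaussianPDFReal b 1).real_toNNReal) φ]
  congr 1
  ext x
  simp [NNReal.smul_def, Real.coe_toNNReal _ (gaussianPDFReal_nonneg b 1 x)]

private lemma measure_Ioi_eq (b : ℝ) :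
    ((gaussianReal b 1) (Set.Ioi 0)).toReal = ∫ x in Set.Ioi (0:ℝ), gaussianPDFReal b 1 x := by
  rw [gaussianReal_apply_eq_integral b one_ne_zero (Set.Ioi 0)]
  exact ENNReal.toReal_ofReal (setIntegral_nonneg measurableSet_Ioi
    fun x _ => gaussianPDFReal_nonneg b 1 x)

private lemma symm_half (a : ℝ) :
    1 - (∫ x in Set.Ioi (0:ℝ), gaussianPDFReal a 1 x)
      = ∫ x in Set.Ioi (0:ℝ), gaussianPDFReal (-a) 1 x := by
  have hInt := integrable_gaussianPDFReal a 1
  have h1 : (∫ x in Set.Iic (0:ℝ), gaussianPDFReal a 1 x)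
      + ∫ x in Set.Ioi (0:ℝ), gaussianPDFReal a 1 x = ∫ x, gaussianPDFReal a 1 x :=
    intervalIntegral.integral_Iic_add_Ioi hInt.integrableOn hInt.integrableOn
  have h2 : ∫ x, gaussianPDFReal a 1 x = 1 := integral_gaussianPDFReal_eq_one a one_ne_zero
  have h3 : (∫ x in Set.Ioi (0:ℝ), gaussianPDFReal (-a) 1 x)
      = ∫ x in Set.Iic (0:ℝ), gaussianPDFReal a 1 x := by
    calc (∫ x in Set.Ioi (0:ℝ), gaussianPDFReal (-a) 1 x)
        = ∫ x in Set.Ioi (0:ℝ), gaussianPDFReal a 1 (-x) := by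
          exact setIntegral_congr_fun measurableSet_Ioi fun x _ => pdf_neg a x
      _ = ∫ x in Set.Iic (-(0:ℝ)), gaussianPDFReal a 1 x := integral_comp_neg_Ioi 0 _
      _ = ∫ x in Set.Iic (0:ℝ), gaussianPDFReal a 1 x := by norm_num
  linarith

private lemma int_mul_integrable (φ : ℝ → ℝ) (hφmeas : Measurable φ)
    (hφrange : ∀ x, φ x ∈ Set.Icc (0 : ℝ) 1) (b : ℝ) :
    Integrable (fun x => gaussianPDFReal b 1 x * φ x) := by
  refine (integrable_gaussianPDFReal b 1).mono
    ((measurable_gaussianPDFReal b 1).mul hφmeas).aestronglyMeasurable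
    (ae_of_all _ fun x => ?_)
  have h0 := (hφrange x).1
  have h1 := (hφrange x).2
  have hp := gaussianPDFReal_nonneg b 1 x
  rw [Real.norm_eq_abs, Real.norm_eq_abs, abs_of_nonneg hp,
    abs_of_nonneg (mul_nonneg hp h0)]
  nlinarith

private lemma NP (φ : ℝ → ℝ) (hφmeas : Measurable φ)
    (hφrange : ∀ x, φ x ∈ Set.Icc (0 : ℝ) 1) {a : ℝ} (ha : 0 ≤ a) :
    (∫ x, gaussianPDFReal a 1 x * φ x) - ∫ x, gaussianPDFReal (-a) 1 x * φ x
      ≤ (∫ x in Set.Ioi (0:ℝ), gaussianPDFReal a 1 x)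
        - ∫ x in Set.Ioi (0:ℝ), gaussianPDFReal (-a) 1 x := by
  set g : ℝ → ℝ := fun x => gaussianPDFReal a 1 x - gaussianPDFReal (-a) 1 x with hg
  have hga : Integrable (fun x => g x * φ x) := by
    have := (int_mul_integrable φ hφmeas hφrange a).sub (int_mul_integrable φ hφmeas hφrange (-a))
    simpa [hg, sub_mul, Pi.sub_def] using this
  have hgint : Integrable g := (integrable_gaussianPDFReal a 1).sub (integrable_gaussianPDFReal (-a) 1)
  -- sign of g
  have hg_pos : ∀ x : ℝ, 0 ≤ x → 0 ≤ g x := by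
    intro x hx
    simp only [hg, sub_nonneg]
    exact pdf_le_pdf (by nlinarith)
  have hg_neg : ∀ x : ℝ, x ≤ 0 → g x ≤ 0 := by
    intro x hx
    simp only [hg, sub_nonpos]
    exact pdf_le_pdf (by nlinarith)
  have lhs_eq : (∫ x, gaussianPDFReal a 1 x * φ x) - (∫ x, gaussianPDFReal (-a) 1 x * φ x)
      = ∫ x, g x * φ x := by
    rw [← integral_sub (int_mul_integrable φ hφmeas hφrange a)
      (int_mul_integrable φ hφmeas hφrange (-a))]
    simp [hg, sub_mul]
  have rhs_eq : (∫ x in Set.Ioi (0:ℝ), gaussianPDFReal a 1 x)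
      - (∫ x in Set.Ioi (0:ℝ), gaussianPDFReal (-a) 1 x) = ∫ x in Set.Ioi (0:ℝ), g x := by
    rw [← integral_sub (integrable_gaussianPDFReal a 1).integrableOn
      (integrable_gaussianPDFReal (-a) 1).integrableOn]
  rw [lhs_eq, rhs_eq]
  have hsplit : (∫ x, g x * φ x)
      = (∫ x in Set.Iic (0:ℝ), g x * φ x) + ∫ x in Set.Ioi (0:ℝ), g x * φ x :=
    (intervalIntegral.integral_Iic_add_Ioi hga.integrableOn hga.integrableOn).symm
  rw [hsplit]
  have h1 : (∫ x in Set.Iic (0:ℝ), g x * φ x) ≤ 0 := by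
    refine setIntegral_nonpos measurableSet_Iic fun x hx => ?_
    exact mul_nonpos_of_nonpos_of_nonneg (hg_neg x hx) (hφrange x).1
  have h2 : (∫ x in Set.Ioi (0:ℝ), g x * φ x) ≤ ∫ x in Set.Ioi (0:ℝ), g x := by
    refine setIntegral_mono_on hga.integrableOn hgint.integrableOn measurableSet_Ioi
      fun x hx => ?_
    have := hg_pos x (le_of_lt hx)
    nlinarith [(hφrange x).2]
  linarith

/-- The zero-threshold rule `1{x > 0}` is minimax for the regret risk
`b·(1{b>0} − ∫ φ dN(b,1))` in the Gaussian shift experiment: its maximal regret over `b ∈ ℝ`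
is no larger than that of any randomized rule `φ : ℝ → [0,1]`. (The regret risk is
nonnegative, so we compare the suprema in `ℝ≥0∞` via `ENNReal.ofReal`.) -/
theorem gaussian_zero_threshold_minimax
    (φ : ℝ → ℝ) (hφmeas : Measurable φ) (hφrange : ∀ x, φ x ∈ Set.Icc (0 : ℝ) 1) :
    (⨆ b : ℝ, ENNReal.ofReal
        (b * ((if 0 < b then (1 : ℝ) else 0) - ((gaussianReal b 1) (Set.Ioi 0)).toReal)))
      ≤ ⨆ b : ℝ, ENNReal.ofReal
          (b * ((if 0 < b then (1 : ℝ) else 0) - ∫ x, φ x ∂(gaussianReal b 1))) := by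
  set S := ⨆ b : ℝ, ENNReal.ofReal
      (b * ((if 0 < b then (1 : ℝ) else 0) - ∫ x, φ x ∂(gaussianReal b 1))) with hS
  -- key bound for a > 0
  have key : ∀ a : ℝ, 0 < a →
      ENNReal.ofReal (a * (1 - ∫ x in Set.Ioi (0:ℝ), gaussianPDFReal a 1 x)) ≤ S := by
    intro a ha
    have hNP := NP φ hφmeas hφrange (le_of_lt ha)
    have hsym := symm_half a
    -- regrets of φ at a and -a
    have hEa : ∫ x, φ x ∂(gaussianReal a 1) = ∫ x, gaussianPDFReal a 1 x * φ x :=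
      int_phi_eq φ hφmeas a
    have hEna : ∫ x, φ x ∂(gaussianReal (-a) 1) = ∫ x, gaussianPDFReal (-a) 1 x * φ x :=
      int_phi_eq φ hφmeas (-a)
    set r1 : ℝ := a * ((if 0 < a then (1:ℝ) else 0) - ∫ x, φ x ∂(gaussianReal a 1)) with hr1
    set r2 : ℝ := (-a) * ((if 0 < (-a) then (1:ℝ) else 0) - ∫ x, φ x ∂(gaussianReal (-a) 1))
      with hr2
    have hr1' : r1 = a * (1 - ∫ x, gaussianPDFReal a 1 x * φ x) := by
      rw [hr1, if_pos ha, hEa]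
    have hr2' : r2 = a * (∫ x, gaussianPDFReal (-a) 1 x * φ x) := by
      rw [hr2, if_neg (by linarith), hEna]; ring
    have hsum : 2 * (a * (1 - ∫ x in Set.Ioi (0:ℝ), gaussianPDFReal a 1 x)) ≤ r1 + r2 := by
      rw [hr1', hr2']
      nlinarith [hNP, hsym]
    have hmax : a * (1 - ∫ x in Set.Ioi (0:ℝ), gaussianPDFReal a 1 x) ≤ max r1 r2 := by
      rcases le_total r1 r2 with h | h
      · have := le_max_right r1 r2; linarith [le_max_right r1 r2]
      · linarith [le_max_left r1 r2]
    calc ENNReal.ofReal (a * (1 - ∫ x in Set.Ioi (0:ℝ), gaussianPDFReal a 1 x))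
        ≤ max (ENNReal.ofReal r1) (ENNReal.ofReal r2) := by
          rcases le_total r1 r2 with h | h
          · exact le_max_of_le_right (ENNReal.ofReal_le_ofReal (by rw [max_eq_right h] at hmax; exact hmax))
          · exact le_max_of_le_left (ENNReal.ofReal_le_ofReal (by rw [max_eq_left h] at hmax; exact hmax))
      _ ≤ S := by
          refine max_le ?_ ?_
          · exact le_iSup (fun b : ℝ => ENNReal.ofReal
              (b * ((if 0 < b then (1:ℝ) else 0) - ∫ x, φ x ∂(gaussianReal b 1)))) a
          · exact le_iSup (fun b : ℝ => ENNReal.ofReal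
              (b * ((if 0 < b then (1:ℝ) else 0) - ∫ x, φ x ∂(gaussianReal b 1)))) (-a)
  refine iSup_le fun b => ?_
  rcases lt_trichotomy b 0 with hb | hb | hb
  · -- b < 0 : regret equals that at -b by symmetry
    have ha : (0:ℝ) < -b := by linarith
    have heq : b * ((if 0 < b then (1:ℝ) else 0) - ((gaussianReal b 1) (Set.Ioi 0)).toReal)
        = (-b) * (1 - ∫ x in Set.Ioi (0:ℝ), gaussianPDFReal (-b) 1 x) := by
      rw [if_neg (by linarith), measure_Ioi_eq b]
      have := symm_half (-b)
      rw [neg_neg] at this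
      rw [← this]
      ring
    rw [heq]
    exact key (-b) ha
  · subst hb
    simp
  · have heq : b * ((if 0 < b then (1:ℝ) else 0) - ((gaussianReal b 1) (Set.Ioi 0)).toReal)
        = b * (1 - ∫ x in Set.Ioi (0:ℝ), gaussianPDFReal b 1 x) := by
      rw [if_pos hb, measure_Ioi_eq b]
    rw [heq]
    exact key b hb
end
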